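/- Let p be a prime and 1 ≤ b < a integers with ν_p(a-b)=0 and {ν_p(a),ν_p(b)}={0,k}. For any integer d > 0, the p-adic limit as e → ∞ of C(a·p^e, b·p^e + d) is 0 in Z_p. -/

import Mathlib

theorem stmt11 (p : ℕ) [Fact p.Prime] (a b k : ℕ) (hb : 1 ≤ b) (hba : b < a)
    (hab : padicValNat p (a - b) = 0)
    (hk : ({padicValNat p a, padicValNat p b} : Set ℕ) = {0, k})
    (d : ℕ) (hd : 0 < d) :
    Filter.Tendsto (fun e : ℕ => (((a * p ^ e).choose (b * p ^ e + d) : ℕ) : ℤ_[p]))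
      Filter.atTop (nhds 0) := by
  have hp : p.Prime := Fact.out
  set s := padicValNat p d with hs
  -- main valuation bound
  have key : ∀ m : ℕ, ∀ᶠ e in Filter.atTop,
      p ^ m ∣ (a * p ^ e).choose (b * p ^ e + d) := by
    intro m
    filter_upwards [Filter.eventually_ge_atTop (m + s + 1),
      Filter.eventually_ge_atTop d] with e he hed
    have hpe : 0 < p ^ e := pow_pos hp.pos e
    have hdpe : d ≤ p ^ e := le_of_lt (lt_of_le_of_lt hed (Nat.lt_pow_self hp.one_lt : e < p ^ e))
    have hle : b * p ^ e + d ≤ a * p ^ e := by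
      calc b * p ^ e + d ≤ b * p ^ e + p ^ e := by omega
        _ = (b + 1) * p ^ e := by ring
        _ ≤ a * p ^ e := Nat.mul_le_mul_right _ (by omega)
    have hCpos : 0 < (a * p ^ e).choose (b * p ^ e + d) := Nat.choose_pos hle
    have hkpos : 0 < b * p ^ e + d := by positivity
    have hapos : 0 < a * p ^ e := Nat.mul_pos (by omega) hpe
    -- the identity
    have hid : (a * p ^ e) * (a * p ^ e - 1).choose (b * p ^ e + d - 1)
        = (a * p ^ e).choose (b * p ^ e + d) * (b * p ^ e + d) := by
      have e1 : a * p ^ e - 1 + 1 = a * p ^ e := by omega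
      have e2 : b * p ^ e + d - 1 + 1 = b * p ^ e + d := by omega
      have := Nat.add_one_mul_choose_eq (a * p ^ e - 1) (b * p ^ e + d - 1)
      simp only [Nat.succ_eq_add_one, e1, e2] at this
      exact this
    have hC'pos : 0 < (a * p ^ e - 1).choose (b * p ^ e + d - 1) :=
      Nat.choose_pos (by omega)
    -- valuation of b * p^e + d is s
    have hvk : padicValNat p (b * p ^ e + d) ≤ s := by
      by_contra h
      push_neg at h
      have h1 : p ^ (s + 1) ∣ b * p ^ e + d :=
        dvd_trans (pow_dvd_pow p h) (pow_padicValNat_dvd)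
      have h2 : p ^ (s + 1) ∣ b * p ^ e :=
        Dvd.dvd.mul_left (pow_dvd_pow p (by omega)) b
      have h3 : p ^ (s + 1) ∣ d := (Nat.dvd_add_right h2).mp h1
      have := (padicValNat_dvd_iff_le (by omega : d ≠ 0)).mp h3
      omega
    -- take valuations of the identity
    have hval : padicValNat p (a * p ^ e) +
        padicValNat p ((a * p ^ e - 1).choose (b * p ^ e + d - 1))
        = padicValNat p ((a * p ^ e).choose (b * p ^ e + d)) +
          padicValNat p (b * p ^ e + d) := by
      rw [← padicValNat.mul (by omega) (by omega), ← padicValNat.mul (by omega) (by omega), hid]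
    have hvape : e ≤ padicValNat p (a * p ^ e) := by
      rw [padicValNat.mul (by omega) (by positivity), padicValNat.prime_pow]
      omega
    have hm : m ≤ padicValNat p ((a * p ^ e).choose (b * p ^ e + d)) := by omega
    exact (padicValNat_dvd_iff_le (by omega)).mpr hm
  -- conclude
  rw [NormedAddCommGroup.tendsto_nhds_zero]
  intro ε hε
  have hp1 : (1 : ℝ) / p < 1 := by
    rw [div_lt_one (by exact_mod_cast hp.pos)]
    exact_mod_cast hp.one_lt
  obtain ⟨m, hm⟩ := exists_pow_lt_of_lt_one hε hp1
  filter_upwards [key m] with e hdvd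
  have hdvd' : (p : ℤ_[p]) ^ m ∣ ((a * p ^ e).choose (b * p ^ e + d) : ℤ_[p]) := by
    exact_mod_cast (Nat.cast_dvd_cast hdvd : ((p ^ m : ℕ) : ℤ_[p]) ∣ _)
  have : ‖(((a * p ^ e).choose (b * p ^ e + d) : ℕ) : ℤ_[p])‖ ≤ (p : ℝ) ^ (-(m : ℤ)) := by
    rw [PadicInt.norm_le_pow_iff_mem_span_pow, Ideal.mem_span_singleton]
    exact hdvd'
  calc ‖(((a * p ^ e).choose (b * p ^ e + d) : ℕ) : ℤ_[p])‖
      ≤ (p : ℝ) ^ (-(m : ℤ)) := this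
    _ = (1 / p : ℝ) ^ m := by
        rw [zpow_neg, zpow_natCast, one_div, inv_pow]
    _ < ε := hm
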